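/- Let w : ℤ → {±1} be any sequence with autocorrelation coefficients η(m) = lim_{N→∞} (1/(2N+1)) ∑_{n=−N}^{N} w(n)w(n+m) existing for all m, and let (X(n))_{n∈ℤ} be i.i.d. ±1-valued with P(X(n)=1)=p. Then almost surely the sequence w(n)X(n) has autocorrelation coefficients η_p(m) = (2p−1)²·η(m) for m ≠ 0 and η_p(0) = 1. -/

import Mathlib

open MeasureTheory ProbabilityTheory Filter


-- a.e. signs lemma
lemma aux_signs {Ω : Type*} [MeasurableSpace Ω] (μ : Measure Ω) [IsProbabilityMeasure μ]
    (p : ℝ) (hp : p ∈ Set.Icc (0:ℝ) 1) (X : ℤ → Ω → ℝ) (hmeas : ∀ n, Measurable (X n))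
    (hone : ∀ n, μ {ω | X n ω = 1} = ENNReal.ofReal p)
    (hmone : ∀ n, μ {ω | X n ω = -1} = ENNReal.ofReal (1 - p)) :
    ∀ᵐ ω ∂μ, ∀ n : ℤ, X n ω = 1 ∨ X n ω = -1 := by
  rw [ae_all_iff]
  intro n
  have hA : MeasurableSet {ω | X n ω = 1} := (hmeas n) (measurableSet_singleton 1)
  have hB : MeasurableSet {ω | X n ω = -1} := (hmeas n) (measurableSet_singleton (-1))
  have hdisj : Disjoint {ω | X n ω = 1} {ω | X n ω = -1} := by
    rw [Set.disjoint_left]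
    rintro ω h1 h2
    simp only [Set.mem_setOf_eq] at h1 h2
    norm_num [h1] at h2
  have hu : μ ({ω | X n ω = 1} ∪ {ω | X n ω = -1}) = 1 := by
    rw [measure_union hdisj hB, hone, hmone,
      ← ENNReal.ofReal_add hp.1 (by linarith [hp.2])]
    norm_num
  have hc : μ ({ω | X n ω = 1} ∪ {ω | X n ω = -1})ᶜ = 0 := by
    rw [measure_compl (hA.union hB) (measure_ne_top μ _), hu, measure_univ, tsub_self]
  refine measure_mono_null ?_ hc
  intro ω hω
  simp only [Set.mem_compl_iff, Set.mem_union, Set.mem_setOf_eq, not_or]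
  simpa [not_or] using hω

-- expectation of X n
lemma aux_EX {Ω : Type*} [MeasurableSpace Ω] (μ : Measure Ω) [IsProbabilityMeasure μ]
    (p : ℝ) (hp : p ∈ Set.Icc (0:ℝ) 1) (f : Ω → ℝ) (hf : Measurable f)
    (hone : μ {ω | f ω = 1} = ENNReal.ofReal p)
    (hmone : μ {ω | f ω = -1} = ENNReal.ofReal (1 - p)) :
    ∫ ω, f ω ∂μ = 2*p - 1 := by
  have hA : MeasurableSet {ω | f ω = 1} := hf (measurableSet_singleton 1)
  have hB : MeasurableSet {ω | f ω = -1} := hf (measurableSet_singleton (-1))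
  have hdisj : Disjoint {ω | f ω = 1} {ω | f ω = -1} := by
    rw [Set.disjoint_left]
    rintro ω h1 h2
    simp only [Set.mem_setOf_eq] at h1 h2
    norm_num [h1] at h2
  have hu : μ ({ω | f ω = 1} ∪ {ω | f ω = -1}) = 1 := by
    rw [measure_union hdisj hB, hone, hmone,
      ← ENNReal.ofReal_add hp.1 (by linarith [hp.2])]
    norm_num
  have hc : μ ({ω | f ω = 1} ∪ {ω | f ω = -1})ᶜ = 0 := by
    rw [measure_compl (hA.union hB) (measure_ne_top μ _), hu, measure_univ, tsub_self]
  have hae : f =ᵐ[μ] fun ω => 2 * ({ω | f ω = 1}).indicator (fun _ => (1:ℝ)) ω - 1 := by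
    have : ∀ᵐ ω ∂μ, ω ∈ {ω | f ω = 1} ∪ {ω | f ω = -1} := by
      rw [ae_iff]
      exact hc
    filter_upwards [this] with ω hω
    rcases hω with h1 | h1
    · simp only [Set.indicator_of_mem h1]
      simp only [Set.mem_setOf_eq] at h1
      rw [h1]; ring
    · have hne : ω ∉ {ω | f ω = 1} := by
        intro hcon
        simp only [Set.mem_setOf_eq] at h1 hcon
        norm_num [hcon] at h1
      simp only [Set.indicator_of_notMem hne]
      simp only [Set.mem_setOf_eq] at h1
      rw [h1]; ring
  rw [integral_congr_ae hae, integral_sub, integral_const_mul, integral_indicator_const _ hA,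
    integral_const, measureReal_def, hone]
  · simp [ENNReal.toReal_ofReal hp.1]
  · exact ((integrable_indicator_iff hA).mpr ((integrableOn_const_iff).mpr (Or.inr (measure_lt_top μ _)))).const_mul 2
  · exact integrable_const 1


lemma aux_sqrt_top : Tendsto (fun N : ℕ => Nat.sqrt N) atTop atTop := by
  apply tendsto_atTop_atTop.mpr
  intro b
  refine ⟨b*b, fun a ha => ?_⟩
  have := Nat.sqrt_le_sqrt ha
  rwa [Nat.sqrt_eq] at this

lemma aux_summable : Summable (fun k : ℕ => 12 / (2*((k:ℝ))^2+1)) := by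
  have h0 : Summable (fun n : ℕ => 1/((n:ℝ))^2) :=
    Real.summable_one_div_nat_pow.mpr one_lt_two
  have h1 : Summable (fun n : ℕ => 1/(((n:ℝ))+1)^2) := by
    have := (summable_nat_add_iff 1).mpr h0
    simpa [Nat.cast_add] using this
  have h2 : Summable (fun n : ℕ => 24 * (1/(((n:ℝ))+1)^2)) := h1.mul_left 24
  refine Summable.of_nonneg_of_le (fun k => by positivity) (fun k => ?_) h2
  rw [mul_one_div]
  rw [div_le_div_iff₀ (by positivity) (by positivity)]
  nlinarith [sq_nonneg ((k:ℝ) - 1), sq_nonneg (k:ℝ)]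

lemma aux_noise {Ω : Type*} [MeasurableSpace Ω] (μ : Measure Ω) [IsProbabilityMeasure μ]
    (m : ℤ)
    (cn : ℤ → ℝ) (hcn : ∀ n, |cn n| = 1)
    (Z : ℤ → Ω → ℝ) (hZmeas : ∀ n, Measurable (Z n))
    (hZb : ∀ᵐ ω ∂μ, ∀ n, |Z n ω| ≤ 2)
    (hEZZ : ∀ a b : ℤ, b ≠ a - m → b ≠ a → b ≠ a + m → ∫ ω, Z a ω * Z b ω ∂μ = 0) :
    ∀ᵐ ω ∂μ, Tendsto
      (fun N : ℕ => (∑ n ∈ Finset.Icc (-(N:ℤ)) N, cn n * Z n ω) / (2*(N:ℝ)+1))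
      atTop (nhds 0) := by
  classical
  set T : ℕ → Ω → ℝ := fun N ω => ∑ n ∈ Finset.Icc (-(N:ℤ)) N, cn n * Z n ω with hT
  set D : ℕ → ℝ := fun N => 2*(N:ℝ)+1 with hD
  have hDpos : ∀ N, 0 < D N := fun N => by positivity
  have hDone : ∀ N, 1 ≤ D N := fun N => by simp only [hD]; have := Nat.cast_nonneg (α:=ℝ) N; linarith
  have hcard : ∀ N : ℕ, (Finset.Icc (-(N:ℤ)) N).card = 2*N+1 := by
    intro N; rw [Int.card_Icc]; omega
  -- integrability of pair products
  have hint2 : ∀ a b : ℤ, Integrable (fun ω => (cn a * Z a ω) * (cn b * Z b ω)) μ := by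
    intro a b
    refine (integrable_const (4:ℝ)).mono'
      ((measurable_const.mul (hZmeas a)).mul (measurable_const.mul (hZmeas b))).aestronglyMeasurable ?_
    filter_upwards [hZb] with ω hω
    have h1 := hω a; have h2 := hω b
    rw [Real.norm_eq_abs, abs_mul, abs_mul, abs_mul, hcn a, hcn b, one_mul, one_mul]
    nlinarith [abs_nonneg (Z a ω), abs_nonneg (Z b ω)]
  have heb : ∀ a b : ℤ, |∫ ω, (cn a * Z a ω) * (cn b * Z b ω) ∂μ| ≤ 4 := by
    intro a b
    have : ‖∫ ω, (cn a * Z a ω) * (cn b * Z b ω) ∂μ‖ ≤ 4 * (μ Set.univ).toReal := by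
      apply norm_integral_le_of_norm_le_const
      filter_upwards [hZb] with ω hω
      have h1 := hω a; have h2 := hω b
      rw [Real.norm_eq_abs, abs_mul, abs_mul, abs_mul, hcn a, hcn b, one_mul, one_mul]
      nlinarith [abs_nonneg (Z a ω), abs_nonneg (Z b ω)]
    simpa using this
  have he0 : ∀ a b : ℤ, b ≠ a - m → b ≠ a → b ≠ a + m →
      ∫ ω, (cn a * Z a ω) * (cn b * Z b ω) ∂μ = 0 := by
    intro a b h1 h2 h3
    have : (fun ω => (cn a * Z a ω) * (cn b * Z b ω))
        = fun ω => (cn a * cn b) * (Z a ω * Z b ω) := by funext ω; ring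
    rw [this, integral_const_mul, hEZZ a b h1 h2 h3, mul_zero]
  -- second moment bound
  have hTsq : ∀ N : ℕ, ∫ ω, (T N ω)^2 ∂μ ≤ 12 * D N := by
    intro N
    have hexp : ∀ ω, (T N ω)^2 = ∑ a ∈ Finset.Icc (-(N:ℤ)) N, ∑ b ∈ Finset.Icc (-(N:ℤ)) N,
        (cn a * Z a ω) * (cn b * Z b ω) := by
      intro ω; rw [sq, hT]; exact Finset.sum_mul_sum _ _ _ _
    simp only [hexp]
    rw [integral_finset_sum _ (fun a _ => integrable_finset_sum _ (fun b _ => hint2 a b))]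
    have hinner : ∀ a ∈ Finset.Icc (-(N:ℤ)) N,
        (∑ b ∈ Finset.Icc (-(N:ℤ)) N, ∫ ω, (cn a * Z a ω) * (cn b * Z b ω) ∂μ) ≤ 12 := by
      intro a _
      set J : Finset ℤ := {a-m, a, a+m} with hJdef
      have hfilter : ∑ b ∈ Finset.Icc (-(N:ℤ)) N, ∫ ω, (cn a * Z a ω) * (cn b * Z b ω) ∂μ
          = ∑ b ∈ (Finset.Icc (-(N:ℤ)) N).filter (· ∈ J), ∫ ω, (cn a * Z a ω) * (cn b * Z b ω) ∂μ := by
        symm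
        apply Finset.sum_filter_of_ne
        intro b _ hne
        by_contra hb
        simp only [hJdef, Finset.mem_insert, Finset.mem_singleton, not_or] at hb
        exact hne (he0 a b hb.1 hb.2.1 hb.2.2)
      rw [hfilter]
      have hcard3 : ((Finset.Icc (-(N:ℤ)) N).filter (· ∈ J)).card ≤ 3 := by
        refine le_trans (Finset.card_le_card (fun x hx => (Finset.mem_filter.mp hx).2)) ?_
        have h1 := Finset.card_insert_le (a-m) ({a, a+m} : Finset ℤ)
        have h2 := Finset.card_insert_le a ({a+m} : Finset ℤ)
        simp only [Finset.card_singleton] at h1 h2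
        simp only [hJdef]
        omega
      calc ∑ b ∈ (Finset.Icc (-(N:ℤ)) N).filter (· ∈ J), ∫ ω, (cn a * Z a ω) * (cn b * Z b ω) ∂μ
          ≤ ∑ b ∈ (Finset.Icc (-(N:ℤ)) N).filter (· ∈ J), 4 := by
            refine Finset.sum_le_sum (fun b _ => ?_)
            exact le_trans (le_abs_self _) (heb a b)
        _ ≤ 12 := by
            rw [Finset.sum_const, nsmul_eq_mul]
            have h4 : (((Finset.Icc (-(N:ℤ)) N).filter (· ∈ J)).card : ℝ) ≤ 3 := by
              exact_mod_cast hcard3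
            nlinarith
    calc (∑ a ∈ Finset.Icc (-(N:ℤ)) N, ∫ ω, ∑ b ∈ Finset.Icc (-(N:ℤ)) N,
            (cn a * Z a ω) * (cn b * Z b ω) ∂μ)
        = ∑ a ∈ Finset.Icc (-(N:ℤ)) N, ∑ b ∈ Finset.Icc (-(N:ℤ)) N,
            ∫ ω, (cn a * Z a ω) * (cn b * Z b ω) ∂μ := by
          refine Finset.sum_congr rfl (fun a _ => ?_)
          exact integral_finset_sum _ (fun b _ => hint2 a b)
      _ ≤ ∑ a ∈ Finset.Icc (-(N:ℤ)) N, 12 := Finset.sum_le_sum hinner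
      _ = ((2*N+1 : ℕ) : ℝ) * 12 := by rw [Finset.sum_const, hcard, nsmul_eq_mul]
      _ ≤ 12 * D N := by simp only [hD]; push_cast; ring_nf; nlinarith [Nat.cast_nonneg (α:=ℝ) N]
  -- measurability of T
  have hTmeas : ∀ N, Measurable (T N) := fun N =>
    Finset.measurable_sum _ (fun n _ => measurable_const.mul (hZmeas n))
  -- a.e. bound on T
  have hTbae : ∀ᵐ ω ∂μ, ∀ N : ℕ, |T N ω| ≤ 2 * D N := by
    filter_upwards [hZb] with ω hω
    intro N
    calc |T N ω| ≤ ∑ n ∈ Finset.Icc (-(N:ℤ)) N, |cn n * Z n ω| :=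
          Finset.abs_sum_le_sum_abs _ _
      _ ≤ ∑ n ∈ Finset.Icc (-(N:ℤ)) N, 2 := by
          refine Finset.sum_le_sum (fun n _ => ?_)
          rw [abs_mul, hcn n, one_mul]; exact hω n
      _ = ((2*N+1 : ℕ) : ℝ) * 2 := by rw [Finset.sum_const, hcard, nsmul_eq_mul]
      _ ≤ 2 * D N := by simp only [hD]; push_cast; ring_nf; nlinarith [Nat.cast_nonneg (α:=ℝ) N]
  -- the squared normalized subsequence
  set g : ℕ → Ω → ℝ := fun k ω => (T (k^2) ω / D (k^2))^2 with hg
  have hgmeas : ∀ k, Measurable (g k) := fun k => ((hTmeas (k^2)).div_const _).pow_const 2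
  have hgint : ∀ k, Integrable (g k) μ := by
    intro k
    refine (integrable_const ((2 * D (k^2))^2)).mono' (hgmeas k).aestronglyMeasurable ?_
    filter_upwards [hTbae] with ω hω
    have h1 := hω (k^2)
    rw [Real.norm_eq_abs, hg]
    have habs : |T (k^2) ω / D (k^2)| ≤ 2 * D (k^2) := by
      rw [abs_div, abs_of_pos (hDpos _)]
      calc |T (k^2) ω| / D (k^2) ≤ |T (k^2) ω| / 1 :=
            div_le_div_of_nonneg_left (abs_nonneg _) one_pos (hDone _)
        _ = |T (k^2) ω| := div_one _
        _ ≤ 2 * D (k^2) := h1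
    calc |(T (k^2) ω / D (k^2))^2| = |T (k^2) ω / D (k^2)|^2 := by rw [abs_pow]
      _ ≤ (2 * D (k^2))^2 := by nlinarith [abs_nonneg (T (k^2) ω / D (k^2))]
  have hgE : ∀ k, ∫ ω, g k ω ∂μ ≤ 12 / D (k^2) := by
    intro k
    have heq : (fun ω => g k ω) = fun ω => (T (k^2) ω)^2 * ((D (k^2))^2)⁻¹ := by
      funext ω; simp only [hg]; rw [div_pow, div_eq_mul_inv]
    rw [heq, integral_mul_const]
    have h1 := hTsq (k^2)
    have h2 : (0:ℝ) < D (k^2) := hDpos _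
    rw [div_eq_mul_inv]
    calc (∫ ω, (T (k^2) ω)^2 ∂μ) * ((D (k^2))^2)⁻¹
        ≤ (12 * D (k^2)) * ((D (k^2))^2)⁻¹ := by
          apply mul_le_mul_of_nonneg_right h1 (by positivity)
      _ = 12 * (D (k^2))⁻¹ := by field_simp
  -- summability of the bounds
  have hS : Summable (fun k : ℕ => 12 / D (k^2)) := by
    have : (fun k : ℕ => 12 / D (k^2)) = fun k : ℕ => 12 / (2*((k:ℝ))^2+1) := by
      funext k; simp only [hD]; push_cast; ring_nf
    rw [this]; exact aux_summable
  -- lintegral estimate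
  have hlin : ∫⁻ ω, ∑' k, ENNReal.ofReal (g k ω) ∂μ ≠ ⊤ := by
    rw [lintegral_tsum (fun k => ((hgmeas k).ennreal_ofReal).aemeasurable)]
    have hkey : ∀ k, ∫⁻ ω, ENNReal.ofReal (g k ω) ∂μ ≤ ENNReal.ofReal (12 / D (k^2)) := by
      intro k
      rw [← ofReal_integral_eq_lintegral_ofReal (hgint k)
        (Filter.Eventually.of_forall (fun ω => sq_nonneg _))]
      exact ENNReal.ofReal_le_ofReal (hgE k)
    refine ne_top_of_le_ne_top ?_ (ENNReal.tsum_le_tsum hkey)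
    rw [← ENNReal.ofReal_tsum_of_nonneg (fun k => by positivity) hS]
    exact ENNReal.ofReal_ne_top
  have hae_fin : ∀ᵐ ω ∂μ, ∑' k, ENNReal.ofReal (g k ω) < ⊤ :=
    ae_lt_top (Measurable.ennreal_tsum (fun k => (hgmeas k).ennreal_ofReal)) hlin
  -- a.e. convergence of the subsequence
  have hsub0 : ∀ᵐ ω ∂μ, Tendsto (fun k => T (k^2) ω / D (k^2)) atTop (nhds 0) := by
    filter_upwards [hae_fin] with ω hω
    have h1 : Tendsto (fun k => ENNReal.ofReal (g k ω)) atTop (nhds 0) :=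
      ENNReal.tendsto_atTop_zero_of_tsum_ne_top hω.ne
    have h2 : Tendsto (fun k => g k ω) atTop (nhds 0) := by
      have h := (ENNReal.tendsto_toReal ENNReal.zero_ne_top).comp h1
      have heq : (ENNReal.toReal ∘ fun k => ENNReal.ofReal (g k ω)) = fun k => g k ω := by
        funext k
        simp only [Function.comp_apply]
        exact ENNReal.toReal_ofReal (sq_nonneg _)
      rw [heq] at h
      simpa using h
    have h3 : Tendsto (fun k => Real.sqrt (g k ω)) atTop (nhds 0) := by
      have := (Real.continuous_sqrt.tendsto 0).comp h2
      simpa [Function.comp_def] using this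
    refine squeeze_zero_norm (fun k => ?_) h3
    rw [Real.norm_eq_abs, hg, Real.sqrt_sq_eq_abs]
  -- gap filling
  filter_upwards [hZb, hsub0] with ω hZω hT0
  have hbound : ∀ N : ℕ, ‖T N ω / D N‖ ≤
      |T ((Nat.sqrt N)^2) ω / D ((Nat.sqrt N)^2)| + 8*((Nat.sqrt N : ℕ):ℝ)/D ((Nat.sqrt N)^2) := by
    intro N
    set s := Nat.sqrt N with hs
    have hsle : s^2 ≤ N := Nat.sqrt_le' N
    have hlt : N < (s+1)^2 := Nat.lt_succ_sqrt' N
    have hsubset : Finset.Icc (-((s^2:ℕ):ℤ)) ((s^2:ℕ):ℤ) ⊆ Finset.Icc (-(N:ℤ)) N := by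
      apply Finset.Icc_subset_Icc <;> [skip; exact_mod_cast hsle] <;>
        simp only [neg_le_neg_iff] <;> exact_mod_cast hsle
    have hdiff : T N ω - T (s^2) ω = ∑ n ∈ Finset.Icc (-(N:ℤ)) N \ Finset.Icc (-((s^2:ℕ):ℤ)) ((s^2:ℕ):ℤ), cn n * Z n ω := by
      have hss := Finset.sum_sdiff (f := fun n => cn n * Z n ω) hsubset
      simp only [hT]
      linarith [hss]
    have hcards : (Finset.Icc (-(N:ℤ)) N \ Finset.Icc (-((s^2:ℕ):ℤ)) ((s^2:ℕ):ℤ)).card ≤ 4*s := by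
      rw [Finset.card_sdiff_of_subset hsubset, hcard N, hcard (s^2)]
      have : N ≤ s^2 + 2*s := by nlinarith [hlt]
      omega
    have hTd : |T N ω - T (s^2) ω| ≤ 8*(s:ℝ) := by
      rw [hdiff]
      calc |∑ n ∈ _, cn n * Z n ω| ≤ ∑ n ∈ Finset.Icc (-(N:ℤ)) N \ Finset.Icc (-((s^2:ℕ):ℤ)) ((s^2:ℕ):ℤ), |cn n * Z n ω| := Finset.abs_sum_le_sum_abs _ _
        _ ≤ ∑ n ∈ Finset.Icc (-(N:ℤ)) N \ Finset.Icc (-((s^2:ℕ):ℤ)) ((s^2:ℕ):ℤ), 2 := by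
            refine Finset.sum_le_sum (fun n _ => ?_)
            rw [abs_mul, hcn n, one_mul]; exact hZω n
        _ = ((Finset.Icc (-(N:ℤ)) N \ Finset.Icc (-((s^2:ℕ):ℤ)) ((s^2:ℕ):ℤ)).card : ℝ) * 2 := by
            rw [Finset.sum_const, nsmul_eq_mul]
        _ ≤ 8*(s:ℝ) := by
            have : ((Finset.Icc (-(N:ℤ)) N \ Finset.Icc (-((s^2:ℕ):ℤ)) ((s^2:ℕ):ℤ)).card : ℝ) ≤ 4*(s:ℝ) := by
              exact_mod_cast hcards
            linarith
    have hDmono : D (s^2) ≤ D N := by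
      simp only [hD]
      have : ((s^2:ℕ):ℝ) ≤ (N:ℝ) := by exact_mod_cast hsle
      linarith
    have hTabs : |T N ω| ≤ |T (s^2) ω| + 8*(s:ℝ) := by
      have := abs_sub_abs_le_abs_sub (T N ω) (T (s^2) ω)
      linarith [hTd]
    rw [Real.norm_eq_abs, abs_div, abs_of_pos (hDpos N)]
    calc |T N ω| / D N ≤ (|T (s^2) ω| + 8*(s:ℝ)) / D N := by
          have hd := hDpos N
          gcongr
      _ = |T (s^2) ω| / D N + 8*(s:ℝ)/D N := add_div _ _ _
      _ ≤ |T (s^2) ω| / D (s^2) + 8*(s:ℝ)/D (s^2) := by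
          have hd := hDpos (s^2)
          have hs0 : (0:ℝ) ≤ (s:ℝ) := Nat.cast_nonneg s
          gcongr
      _ = |T (s^2) ω / D (s^2)| + 8*(s:ℝ)/D (s^2) := by
          rw [abs_div, abs_of_pos (hDpos _)]
  -- the bound tends to zero
  have hb2 : Tendsto (fun k : ℕ => 8*((k:ℕ):ℝ)/D (k^2)) atTop (nhds 0) := by
    have hle : ∀ᶠ k : ℕ in atTop, 8*((k:ℕ):ℝ)/D (k^2) ≤ 4/(k:ℝ) := by
      filter_upwards [eventually_ge_atTop 1] with k hk
      have hk1 : (1:ℝ) ≤ (k:ℝ) := by exact_mod_cast hk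
      have hDk : D (k^2) = 2*((k:ℝ))^2+1 := by simp only [hD]; push_cast; ring
      rw [hDk, div_le_div_iff₀ (by positivity) (by positivity)]
      nlinarith
    have h4 : Tendsto (fun k : ℕ => 4/(k:ℝ)) atTop (nhds 0) :=
      tendsto_const_div_atTop_nhds_zero_nat 4
    refine squeeze_zero' (Filter.Eventually.of_forall (fun k => by positivity)) hle h4
  have hBtend : Tendsto (fun N : ℕ =>
      |T ((Nat.sqrt N)^2) ω / D ((Nat.sqrt N)^2)| + 8*((Nat.sqrt N : ℕ):ℝ)/D ((Nat.sqrt N)^2))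
      atTop (nhds 0) := by
    have h1 : Tendsto (fun k : ℕ => |T (k^2) ω / D (k^2)| + 8*((k:ℕ):ℝ)/D (k^2)) atTop (nhds 0) := by
      have := (hT0.abs).add hb2
      simpa using this
    exact h1.comp aux_sqrt_top
  exact squeeze_zero_norm hbound hBtend


private theorem main_aux
    {Ω : Type*} [MeasurableSpace Ω] (μ : Measure Ω) [IsProbabilityMeasure μ]
    (p : ℝ) (hp : p ∈ Set.Icc (0 : ℝ) 1)
    (w : ℤ → ℝ) (hw : ∀ n, w n = 1 ∨ w n = -1)
    (η : ℤ → ℝ)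
    (hη : ∀ m : ℤ, Tendsto
      (fun N : ℕ => (∑ n ∈ Finset.Icc (-(N : ℤ)) N, w n * w (n + m)) / (2 * N + 1))
      atTop (nhds (η m)))
    (X : ℤ → Ω → ℝ) (hmeas : ∀ n, Measurable (X n))
    (hindep : iIndepFun X μ)
    (hone : ∀ n, μ {ω | X n ω = 1} = ENNReal.ofReal p)
    (hmone : ∀ n, μ {ω | X n ω = -1} = ENNReal.ofReal (1 - p))
    (aux_signs' : ∀ᵐ ω ∂μ, ∀ n : ℤ, X n ω = 1 ∨ X n ω = -1)
    (aux_EX' : ∀ n : ℤ, ∫ ω, X n ω ∂μ = 2*p - 1)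
    (aux_noise' : ∀ (m : ℤ) (cn : ℤ → ℝ), (∀ n, |cn n| = 1) → ∀ (Z : ℤ → Ω → ℝ),
      (∀ n, Measurable (Z n)) → (∀ᵐ ω ∂μ, ∀ n, |Z n ω| ≤ 2) →
      (∀ a b : ℤ, b ≠ a - m → b ≠ a → b ≠ a + m → ∫ ω, Z a ω * Z b ω ∂μ = 0) →
      ∀ᵐ ω ∂μ, Tendsto
        (fun N : ℕ => (∑ n ∈ Finset.Icc (-(N:ℤ)) N, cn n * Z n ω) / (2*(N:ℝ)+1))
        atTop (nhds 0))
    (m : ℤ) (hm : m ≠ 0) :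
    ∀ᵐ ω ∂μ, Tendsto
      (fun N : ℕ => (∑ n ∈ Finset.Icc (-(N : ℤ)) N,
        (w n * X n ω) * (w (n + m) * X (n + m) ω)) / (2 * N + 1))
      atTop (nhds (if m = 0 then 1 else (2 * p - 1) ^ 2 * η m)) := by
  set c : ℝ := (2*p - 1)^2 with hc
  have hc0 : 0 ≤ c := sq_nonneg _
  have hc1 : c ≤ 1 := by
    rw [hc]
    nlinarith [hp.1, hp.2]
  set cn : ℤ → ℝ := fun n => w n * w (n + m) with hcn
  have hcn1 : ∀ n, |cn n| = 1 := by
    intro n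
    rcases hw n with h1 | h1 <;> rcases hw (n + m) with h2 | h2 <;> simp [hcn, h1, h2]
  set Z : ℤ → Ω → ℝ := fun n ω => X n ω * X (n + m) ω - c with hZ
  have hZmeas : ∀ n, Measurable (Z n) := fun n =>
    ((hmeas n).mul (hmeas (n + m))).sub measurable_const
  have hZb : ∀ᵐ ω ∂μ, ∀ n, |Z n ω| ≤ 2 := by
    filter_upwards [aux_signs'] with ω hω
    intro n
    have h1 := hω n; have h2 := hω (n + m)
    simp only [hZ]
    rcases h1 with h1 | h1 <;> rcases h2 with h2 | h2 <;> rw [h1, h2] <;>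
      rw [abs_le] <;> constructor <;> nlinarith
  -- integrability of the X's
  have hXint : ∀ n, Integrable (X n) μ := by
    intro n
    refine (integrable_const (1:ℝ)).mono' (hmeas n).aestronglyMeasurable ?_
    filter_upwards [aux_signs'] with ω hω
    rcases hω n with h | h <;> simp [h]
  have hXXint : ∀ a b : ℤ, Integrable (fun ω => X a ω * X b ω) μ := by
    intro a b
    refine (integrable_const (1:ℝ)).mono' ((hmeas a).mul (hmeas b)).aestronglyMeasurable ?_
    filter_upwards [aux_signs'] with ω hω
    rcases hω a with h1 | h1 <;> rcases hω b with h2 | h2 <;> simp [h1, h2]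
  have hZint : ∀ n, Integrable (Z n) μ := fun n =>
    (hXXint n (n + m)).sub (integrable_const c)
  -- expectation of products
  have hEXX : ∀ a b : ℤ, a ≠ b → ∫ ω, X a ω * X b ω ∂μ = c := by
    intro a b hab
    have h := (hindep.indepFun hab).integral_mul_eq_mul_integral (hXint a).aestronglyMeasurable (hXint b).aestronglyMeasurable
    have : (fun ω => X a ω * X b ω) = X a * X b := rfl
    rw [this, h, aux_EX' a, aux_EX' b, hc]
    ring
  have hEZ : ∀ a : ℤ, ∫ ω, Z a ω ∂μ = 0 := by
    intro a
    simp only [hZ]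
    rw [integral_sub (hXXint a (a + m)) (integrable_const c), integral_const]
    rw [hEXX a (a + m) (by omega)]
    simp
  have hEZZ : ∀ a b : ℤ, b ≠ a - m → b ≠ a → b ≠ a + m → ∫ ω, Z a ω * Z b ω ∂μ = 0 := by
    intro a b h1 h2 h3
    have hind1 : IndepFun (X a * X (a + m)) (X b * X (b + m)) μ :=
      hindep.indepFun_mul_mul hmeas a (a + m) b (b + m)
        (by omega) (by omega) (by omega) (by omega)
    have hind2 : IndepFun (Z a) (Z b) μ := by
      have hmsub : Measurable (fun x : ℝ => x - c) := measurable_id.sub measurable_const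
      exact hind1.comp hmsub hmsub
    have h : ∫ ω, Z a ω * Z b ω ∂μ = (∫ ω, Z a ω ∂μ) * ∫ ω, Z b ω ∂μ :=
      hind2.integral_fun_mul_eq_mul_integral (hZint a).aestronglyMeasurable (hZint b).aestronglyMeasurable
    rw [h, hEZ a, hEZ b, mul_zero]
  -- apply the noise lemma
  have hnoise := aux_noise' m cn hcn1 Z hZmeas hZb hEZZ
  filter_upwards [hnoise] with ω hω
  have hkey : (fun N : ℕ => (∑ n ∈ Finset.Icc (-(N : ℤ)) N,
        (w n * X n ω) * (w (n + m) * X (n + m) ω)) / (2 * (N:ℝ) + 1))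
      = fun N : ℕ => (∑ n ∈ Finset.Icc (-(N:ℤ)) N, cn n * Z n ω) / (2*(N:ℝ)+1)
        + c * ((∑ n ∈ Finset.Icc (-(N:ℤ)) N, w n * w (n + m)) / (2*(N:ℝ)+1)) := by
    funext N
    have hsum : ∑ n ∈ Finset.Icc (-(N : ℤ)) N, (w n * X n ω) * (w (n + m) * X (n + m) ω)
        = (∑ n ∈ Finset.Icc (-(N:ℤ)) N, cn n * Z n ω)
          + c * ∑ n ∈ Finset.Icc (-(N:ℤ)) N, w n * w (n + m) := by
      rw [Finset.mul_sum, ← Finset.sum_add_distrib]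
      refine Finset.sum_congr rfl (fun n _ => ?_)
      simp only [hZ, hcn]
      ring
    rw [hsum, add_div, mul_div_assoc]
  rw [hkey, if_neg hm]
  have h2 : Tendsto (fun N : ℕ => c * ((∑ n ∈ Finset.Icc (-(N:ℤ)) N, w n * w (n + m)) / (2*(N:ℝ)+1)))
      atTop (nhds (c * η m)) := (hη m).const_mul c
  have := hω.add h2
  simpa using this


/-- Bernoullisation: if the deterministic `±1`-sequence `w` has autocorrelation
coefficients `η`, then after independent random sign flips (keeping the sign with
probability `p`) the autocorrelation coefficients are almost surely
`(2p-1)² η(m)` for `m ≠ 0`, and `1` for `m = 0`. -/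
theorem bernoullisation_autocorrelation
    {Ω : Type*} [MeasurableSpace Ω] (μ : Measure Ω) [IsProbabilityMeasure μ]
    (p : ℝ) (hp : p ∈ Set.Icc (0 : ℝ) 1)
    (w : ℤ → ℝ) (hw : ∀ n, w n = 1 ∨ w n = -1)
    (η : ℤ → ℝ)
    (hη : ∀ m : ℤ, Tendsto
      (fun N : ℕ => (∑ n ∈ Finset.Icc (-(N : ℤ)) N, w n * w (n + m)) / (2 * N + 1))
      atTop (nhds (η m)))
    (X : ℤ → Ω → ℝ) (hmeas : ∀ n, Measurable (X n))
    (hindep : iIndepFun X μ)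
    (hone : ∀ n, μ {ω | X n ω = 1} = ENNReal.ofReal p)
    (hmone : ∀ n, μ {ω | X n ω = -1} = ENNReal.ofReal (1 - p)) :
    ∀ m : ℤ, ∀ᵐ ω ∂μ, Tendsto
      (fun N : ℕ => (∑ n ∈ Finset.Icc (-(N : ℤ)) N,
        (w n * X n ω) * (w (n + m) * X (n + m) ω)) / (2 * N + 1))
      atTop (nhds (if m = 0 then 1 else (2 * p - 1) ^ 2 * η m)) := by
  intro m
  have hsigns : ∀ᵐ ω ∂μ, ∀ n : ℤ, X n ω = 1 ∨ X n ω = -1 :=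
    aux_signs μ p hp X hmeas hone hmone
  by_cases hm : m = 0
  · subst hm
    rw [if_pos rfl]
    filter_upwards [hsigns] with ω hω
    have key : (fun N : ℕ => (∑ n ∈ Finset.Icc (-(N : ℤ)) N,
          (w n * X n ω) * (w (n + (0:ℤ)) * X (n + (0:ℤ)) ω)) / (2 * (N:ℝ) + 1)) = fun _ => (1:ℝ) := by
      funext N
      have h1 : ∀ n ∈ Finset.Icc (-(N:ℤ)) N,
          (w n * X n ω) * (w (n + (0:ℤ)) * X (n + (0:ℤ)) ω) = 1 := by
        intro n _
        rcases hw n with h1 | h1 <;> rcases hω n with h2 | h2 <;> simp [h1, h2]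
      rw [Finset.sum_congr rfl h1, Finset.sum_const]
      have hcard : (Finset.Icc (-(N:ℤ)) N).card = 2*N+1 := by
        rw [Int.card_Icc]; omega
      rw [hcard]
      have hc : ((2*N+1 : ℕ) : ℝ) = 2*(N:ℝ)+1 := by push_cast; ring
      rw [nsmul_eq_mul, hc, mul_one, div_self]
      positivity
    rw [key]
    exact tendsto_const_nhds
  · exact main_aux μ p hp w hw η hη X hmeas hindep hone hmone hsigns
      (fun n => aux_EX μ p hp (X n) (hmeas n) (hone n) (hmone n))
      (fun m' cn hcn Z hZm hZb hEZZ => aux_noise μ m' cn hcn Z hZm hZb hEZZ) m hm
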